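/- Let G be a graph with vertex partition A_1, ..., A_r, each of size at least c·n for some constant c > 0, such that every vertex of A_i is adjacent to all but at most d vertices outside A_i. Let F be a graph, F' an induced subgraph of F such that F minus V(F') admits a proper s-coloring (s ≤ r), and suppose a copy of F' is embedded in G using only vertices outside A_1 ∪ ... ∪ A_s. If c·n > |V(F)|·(d+1), then this copy of F' extends to a copy of F in G, where for each i ≤ s the i-th color class of F − V(F') is embedded into A_i. -/

import Mathlib

open SimpleGraph

/-- Greedy extension lemma: let `G` have a vertex partition `A 1, …, A r` with
parts of size at least `c·n` (`n = |V(G)|`), in which every vertex is adjacent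
to all but at most `d` vertices outside its own part. Let `F'` (given by the
vertex subset `S` of `F`) be an induced subgraph of `F` such that `F − V(F')`
has a proper `s`-coloring `col` (`s ≤ r`), and suppose a copy `φ` of `F'` is
embedded in `G` avoiding `A 1 ∪ … ∪ A s`. If `c·n > |V(F)|·(d+1)`, then this
copy extends to a copy of `F` in `G`, with the `i`-th color class embedded
into `A i`. -/
theorem stmt_11 {V W : Type} [Fintype V] [Fintype W]
    (G : SimpleGraph V) (F : SimpleGraph W)
    (r s : ℕ) (hsr : s ≤ r) (c : ℝ) (hc : 0 < c) (d : ℕ)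
    (A : Fin r → Set V) (hpart : ∀ x : V, ∃! i, x ∈ A i)
    (hsize : ∀ i, c * (Fintype.card V : ℝ) ≤ ((A i).ncard : ℝ))
    (hnonadj : ∀ i, ∀ x ∈ A i, ({y | y ∉ A i ∧ ¬ G.Adj x y}).ncard ≤ d)
    (S : Finset W) (col : W → Fin s)
    (hcol : ∀ v w, v ∉ S → w ∉ S → F.Adj v w → col v ≠ col w)
    (φ : W → V)
    (hinj : ∀ v ∈ S, ∀ w ∈ S, φ v = φ w → v = w)
    (hhom : ∀ v ∈ S, ∀ w ∈ S, F.Adj v w → G.Adj (φ v) (φ w))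
    (havoid : ∀ w ∈ S, ∀ i : Fin r, i.val < s → φ w ∉ A i)
    (hbig : (Fintype.card W : ℝ) * (d + 1) < c * (Fintype.card V : ℝ)) :
    ∃ ψ : W → V, Function.Injective ψ ∧ (∀ w ∈ S, ψ w = φ w) ∧
      (∀ v w, F.Adj v w → G.Adj (ψ v) (ψ w)) ∧
      ∀ w, w ∉ S → ψ w ∈ A (Fin.castLE hsr (col w)) := by
  classical
  have key : ∀ T : Finset W, (∀ w ∈ T, w ∉ S) → ∃ ψ : W → V,
      (∀ w ∈ S, ψ w = φ w) ∧
      (∀ v ∈ S ∪ T, ∀ w ∈ S ∪ T, ψ v = ψ w → v = w) ∧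
      (∀ v ∈ S ∪ T, ∀ w ∈ S ∪ T, F.Adj v w → G.Adj (ψ v) (ψ w)) ∧
      (∀ w ∈ T, ψ w ∈ A (Fin.castLE hsr (col w))) := by
    intro T
    induction T using Finset.induction_on with
    | empty =>
      intro _
      refine ⟨φ, fun w _ => rfl, ?_, ?_, by simp⟩
      · simpa using hinj
      · simpa using hhom
    | @insert a T haT ih =>
      intro hT
      have haS : a ∉ S := hT a (Finset.mem_insert_self a T)
      obtain ⟨ψ, hψS, hψinj, hψadj, hψcol⟩ :=
        ih (fun w hw => hT w (Finset.mem_insert_of_mem hw))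
      set i : Fin r := Fin.castLE hsr (col a) with hi
      have hival : (i : Fin r).val < s := by
        simpa [hi] using (col a).isLt
      -- every already-embedded neighbor of `a` lies in a part different from `i`
      have hψnotAi : ∀ w ∈ S ∪ T, F.Adj a w → ∃ j : Fin r, j ≠ i ∧ ψ w ∈ A j := by
        intro w hw hadj
        rcases Finset.mem_union.mp hw with hwS | hwT
        · obtain ⟨j, hj, -⟩ := hpart (ψ w)
          refine ⟨j, ?_, hj⟩
          intro hji
          rw [hψS w hwS] at hj
          exact havoid w hwS j (by rw [hji]; exact hival) hj
        · refine ⟨Fin.castLE hsr (col w), ?_, hψcol w hwT⟩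
          intro he
          have : col w = col a := Fin.castLE_injective hsr (by rw [he, hi])
          exact hcol a w haS (hT w (Finset.mem_insert_of_mem hwT)) hadj this.symm
      have hdisj : ∀ j : Fin r, j ≠ i → ∀ y ∈ A i, y ∉ A j := by
        intro j hj y hyi hyj
        obtain ⟨k, -, hk⟩ := hpart y
        exact hj ((hk j hyj).trans (hk i hyi).symm)
      -- the bad set of each embedded neighbor, restricted to `A i`, is small
      have hbadcard : ∀ w ∈ S ∪ T, F.Adj a w →
          ((A i ∩ {y | ¬ G.Adj (ψ w) y}).toFinite.toFinset).card ≤ d := by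
        intro w hw hadj
        obtain ⟨j, hji, hwj⟩ := hψnotAi w hw hadj
        have hsub : A i ∩ {y | ¬ G.Adj (ψ w) y} ⊆ {y | y ∉ A j ∧ ¬ G.Adj (ψ w) y} := by
          intro y hy
          exact ⟨hdisj j hji y hy.1, hy.2⟩
        calc ((A i ∩ {y | ¬ G.Adj (ψ w) y}).toFinite.toFinset).card
            = (A i ∩ {y | ¬ G.Adj (ψ w) y}).ncard :=
              (Set.ncard_eq_toFinset_card _ _).symm
          _ ≤ ({y | y ∉ A j ∧ ¬ G.Adj (ψ w) y}).ncard :=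
              Set.ncard_le_ncard hsub (Set.toFinite _)
          _ ≤ d := hnonadj j (ψ w) hwj
      -- the forbidden set
      set B : Finset V := (S ∪ T).image ψ ∪
        ((S ∪ T).filter (fun w => F.Adj a w)).biUnion
          (fun w => (A i ∩ {y | ¬ G.Adj (ψ w) y}).toFinite.toFinset) with hB
      have hBcard : B.card ≤ (S ∪ T).card * (d + 1) := by
        calc B.card ≤ ((S ∪ T).image ψ).card +
            (((S ∪ T).filter (fun w => F.Adj a w)).biUnion
              (fun w => (A i ∩ {y | ¬ G.Adj (ψ w) y}).toFinite.toFinset)).card :=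
              Finset.card_union_le _ _
          _ ≤ (S ∪ T).card + (S ∪ T).card * d := by
              gcongr ?_ + ?_
              · exact Finset.card_image_le
              · calc (((S ∪ T).filter (fun w => F.Adj a w)).biUnion
                    (fun w => (A i ∩ {y | ¬ G.Adj (ψ w) y}).toFinite.toFinset)).card
                    ≤ ∑ w ∈ (S ∪ T).filter (fun w => F.Adj a w),
                        ((A i ∩ {y | ¬ G.Adj (ψ w) y}).toFinite.toFinset).card :=
                      Finset.card_biUnion_le
                  _ ≤ ∑ w ∈ (S ∪ T).filter (fun w => F.Adj a w), d := by
                      refine Finset.sum_le_sum ?_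
                      intro w hw
                      rw [Finset.mem_filter] at hw
                      exact hbadcard w hw.1 hw.2
                  _ = ((S ∪ T).filter (fun w => F.Adj a w)).card * d := by
                      rw [Finset.sum_const, smul_eq_mul]
                  _ ≤ (S ∪ T).card * d := by
                      gcongr
                      exact Finset.filter_subset _ _
          _ = (S ∪ T).card * (d + 1) := by ring
      have haST : a ∉ S ∪ T := by simp [haS, haT]
      have hSTcard : (S ∪ T).card + 1 ≤ Fintype.card W := by
        have h := Finset.card_le_univ (insert a (S ∪ T))
        rwa [Finset.card_insert_of_notMem haST] at h
      have hAicard : Fintype.card W * (d + 1) < (A i).ncard := by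
        have h := lt_of_lt_of_le hbig (hsize i)
        exact_mod_cast h
      have hlt : B.card < ((A i).toFinite.toFinset).card := by
        rw [← Set.ncard_eq_toFinset_card _ ((A i).toFinite)]
        calc B.card ≤ (S ∪ T).card * (d + 1) := hBcard
          _ < ((S ∪ T).card + 1) * (d + 1) := by nlinarith
          _ ≤ Fintype.card W * (d + 1) := by gcongr
          _ < (A i).ncard := hAicard
        -- ncard vs toFinset.card handled below
      obtain ⟨y, hyA, hyB⟩ := Finset.not_subset.mp
        (fun h => absurd (Finset.card_le_card h) (not_le.mpr hlt))
      have hyAi : y ∈ A i := (Set.Finite.mem_toFinset _).mp hyA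
      refine ⟨Function.update ψ a y, ?_, ?_, ?_, ?_⟩
      · intro w hw
        rw [Function.update_of_ne (by rintro rfl; exact haS hw)]
        exact hψS w hw
      · intro v hv w hw heq
        rw [Finset.union_insert, Finset.mem_insert] at hv hw
        rcases hv with rfl | hv <;> rcases hw with rfl | hw
        · rfl
        · exfalso
          rw [Function.update_self, Function.update_of_ne (by rintro rfl; exact haST hw)] at heq
          exact hyB (Finset.mem_union_left _
            (Finset.mem_image.mpr ⟨w, hw, heq.symm⟩))
        · exfalso
          rw [Function.update_self, Function.update_of_ne (by rintro rfl; exact haST hv)] at heq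
          exact hyB (Finset.mem_union_left _
            (Finset.mem_image.mpr ⟨v, hv, heq⟩))
        · rw [Function.update_of_ne (by rintro rfl; exact haST hv),
            Function.update_of_ne (by rintro rfl; exact haST hw)] at heq
          exact hψinj v hv w hw heq
      · intro v hv w hw hadj
        rw [Finset.union_insert, Finset.mem_insert] at hv hw
        have hAdjy : ∀ u ∈ S ∪ T, F.Adj a u → G.Adj y (ψ u) := by
          intro u hu hau
          have hnb : y ∉ (A i ∩ {z | ¬ G.Adj (ψ u) z}).toFinite.toFinset := by
            intro hmem
            exact hyB (Finset.mem_union_right _ (Finset.mem_biUnion.mpr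
              ⟨u, Finset.mem_filter.mpr ⟨hu, hau⟩, hmem⟩))
          rw [Set.Finite.mem_toFinset] at hnb
          have : G.Adj (ψ u) y := by
            by_contra hcon
            exact hnb ⟨hyAi, hcon⟩
          exact this.symm
        rcases hv with rfl | hv <;> rcases hw with rfl | hw
        · exact absurd hadj (F.loopless.irrefl _)
        · rw [Function.update_self, Function.update_of_ne (by rintro rfl; exact haST hw)]
          exact hAdjy w hw hadj
        · rw [Function.update_self, Function.update_of_ne (by rintro rfl; exact haST hv)]
          exact (hAdjy v hv hadj.symm).symm
        · rw [Function.update_of_ne (by rintro rfl; exact haST hv),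
            Function.update_of_ne (by rintro rfl; exact haST hw)]
          exact hψadj v hv w hw hadj
      · intro w hw
        rcases Finset.mem_insert.mp hw with rfl | hwT
        · rw [Function.update_self]
          exact hyAi
        · rw [Function.update_of_ne (by rintro rfl; exact haT hwT)]
          exact hψcol w hwT
  obtain ⟨ψ, hS, hinj', hadj', hcol'⟩ := key (Finset.univ \ S) (by simp)
  have huniv : S ∪ (Finset.univ \ S) = Finset.univ :=
    Finset.union_sdiff_of_subset (Finset.subset_univ S)
  refine ⟨ψ, ?_, hS, ?_, ?_⟩
  · intro v w heq
    exact hinj' v (by rw [huniv]; exact Finset.mem_univ v)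
      w (by rw [huniv]; exact Finset.mem_univ w) heq
  · intro v w hadj
    exact hadj' v (by rw [huniv]; exact Finset.mem_univ v)
      w (by rw [huniv]; exact Finset.mem_univ w) hadj
  · intro w hw
    exact hcol' w (by simp [hw])
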